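/- Let c* be the unique positive root of 2 − 2e^c + c(e^c − 2) = 0. For every real b with b ≥ 1/c*, the program value α(b) = sup{ w·c²·e^{−c} − w²·c²·e^{−2c} : 0 ≤ w ≤ 1, c ≥ 0, w ≤ b·c } equals sup_{c ≥ 0} c²(e^{−c} − e^{−2c}) = (c*)²(e^{−c*} − e^{−2c*}), and this value is attained at the feasible point w = 1, c = c*. -/

import Mathlib

open Real

noncomputable def alphaVal (b : ℝ) : ℝ :=
  sSup {v : ℝ | ∃ w c : ℝ, 0 ≤ w ∧ w ≤ 1 ∧ 0 ≤ c ∧ w ≤ b * c ∧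
    v = w * c ^ 2 * Real.exp (-c) - w ^ 2 * c ^ 2 * Real.exp (-(2 * c))}

private lemma hasDerivAt_h1 (c : ℝ) :
    HasDerivAt (fun c => Real.exp c * (c - 1) - 2) (c * Real.exp c) c := by
  have := ((Real.hasDerivAt_exp c).mul ((hasDerivAt_id c).sub_const 1)).sub_const 2
  exact this.congr_deriv (by simp [id_eq]; ring)

private lemma hasDerivAt_h (c : ℝ) :
    HasDerivAt (fun c => 2 - 2 * Real.exp c + c * (Real.exp c - 2))
      (Real.exp c * (c - 1) - 2) c := by
  have := (((Real.hasDerivAt_exp c).const_mul 2).const_sub 2).add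
    ((hasDerivAt_id c).mul ((Real.hasDerivAt_exp c).sub_const 2))
  exact this.congr_deriv (by simp [id_eq]; ring)

private lemma hasDerivAt_g (c : ℝ) :
    HasDerivAt (fun c => c ^ 2 * Real.exp (-c) - c ^ 2 * Real.exp (-(2 * c)))
      ((2 * c - c ^ 2) * Real.exp (-c) - (2 * c - 2 * c ^ 2) * Real.exp (-(2 * c))) c := by
  have e1 : HasDerivAt (fun c : ℝ => Real.exp (-c)) (-Real.exp (-c)) c := by
    have := ((hasDerivAt_id c).neg).exp
    exact this.congr_deriv (by simp [id_eq])
  have e2 : HasDerivAt (fun c : ℝ => Real.exp (-(2 * c))) (-2 * Real.exp (-(2 * c))) c := by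
    have := (((hasDerivAt_id c).const_mul 2).neg).exp
    exact this.congr_deriv (by simp [id_eq]; ring)
  have := (((hasDerivAt_pow 2 c).mul e1)).sub ((hasDerivAt_pow 2 c).mul e2)
  exact this.congr_deriv (by ring)

/-- Sign of h(c) = 2 - 2e^c + c(e^c-2). -/
private lemma h_sign (cs : ℝ) (hcs : 0 < cs)
    (hroot : 2 - 2 * Real.exp cs + cs * (Real.exp cs - 2) = 0) :
    (∀ c, 0 ≤ c → c ≤ cs → 2 - 2 * Real.exp c + c * (Real.exp c - 2) ≤ 0) ∧
    (∀ c, cs ≤ c → 0 ≤ 2 - 2 * Real.exp c + c * (Real.exp c - 2)) := by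
  set h : ℝ → ℝ := fun c => 2 - 2 * Real.exp c + c * (Real.exp c - 2) with hh
  set h1 : ℝ → ℝ := fun c => Real.exp c * (c - 1) - 2 with hh1
  have h1mono : StrictMonoOn h1 (Set.Ici (0:ℝ)) := by
    apply strictMonoOn_of_hasDerivWithinAt_pos (f' := fun c => c * Real.exp c)
      (convex_Ici 0) (fun x _ => (hasDerivAt_h1 x).continuousAt.continuousWithinAt)
      (fun x _ => (hasDerivAt_h1 x).hasDerivWithinAt)
    intro x hx
    rw [interior_Ici] at hx
    exact mul_pos hx (Real.exp_pos x)
  have h10 : h1 0 = -3 := by simp [hh1]; norm_num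
  have h0 : h 0 = 0 := by simp [hh]
  -- h1 cs > 0
  have h1cs : 0 < h1 cs := by
    by_contra hle
    push_neg at hle
    have hanti : StrictAntiOn h (Set.Icc 0 cs) := by
      apply strictAntiOn_of_hasDerivWithinAt_neg (f' := h1)
        (convex_Icc 0 cs) (fun x _ => (hasDerivAt_h x).continuousAt.continuousWithinAt)
        (fun x _ => (hasDerivAt_h x).hasDerivWithinAt)
      intro x hx
      rw [interior_Icc] at hx
      exact lt_of_lt_of_le (h1mono (Set.mem_Ici.2 hx.1.le) (Set.mem_Ici.2 hcs.le) hx.2) hle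
    have := hanti (Set.mem_Icc.2 ⟨le_rfl, hcs.le⟩) (Set.mem_Icc.2 ⟨hcs.le, le_rfl⟩) hcs
    rw [h0] at this
    change 2 - 2 * Real.exp cs + cs * (Real.exp cs - 2) < 0 at this
    linarith
  -- IVT: obtain t with h1 t = 0, 0 < t < cs
  have hcont : ContinuousOn h1 (Set.Icc 0 cs) :=
    fun x _ => (hasDerivAt_h1 x).continuousAt.continuousWithinAt
  have hivt := intermediate_value_Ioo hcs.le hcont
  have hmem : (0:ℝ) ∈ Set.Ioo (h1 0) (h1 cs) := by
    rw [h10]; exact ⟨by norm_num, h1cs⟩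
  obtain ⟨t, ht, h1t⟩ := hivt hmem
  -- h strictly anti on [0,t], strictly mono on [t,∞)
  have hanti : StrictAntiOn h (Set.Icc 0 t) := by
    apply strictAntiOn_of_hasDerivWithinAt_neg (f' := h1)
      (convex_Icc 0 t) (fun x _ => (hasDerivAt_h x).continuousAt.continuousWithinAt)
      (fun x _ => (hasDerivAt_h x).hasDerivWithinAt)
    intro x hx
    rw [interior_Icc] at hx
    have := h1mono (Set.mem_Ici.2 hx.1.le) (Set.mem_Ici.2 (hx.1.le.trans hx.2.le)) hx.2
    rw [h1t] at this; exact this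
  have hmono : StrictMonoOn h (Set.Ici t) := by
    apply strictMonoOn_of_hasDerivWithinAt_pos (f' := h1)
      (convex_Ici t) (fun x _ => (hasDerivAt_h x).continuousAt.continuousWithinAt)
      (fun x _ => (hasDerivAt_h x).hasDerivWithinAt)
    intro x hx
    rw [interior_Ici] at hx
    have hx' : t < x := hx
    have := h1mono (Set.mem_Ici.2 ht.1.le) (Set.mem_Ici.2 (ht.1.trans hx').le) hx'
    rw [h1t] at this; exact this
  have hcs0 : h cs = 0 := hroot
  constructor
  · intro c hc0 hccs
    rcases le_or_gt c t with hct | htc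
    · rcases eq_or_lt_of_le hc0 with hc0' | hc0'
      · rw [← hc0']; simp
      · have := hanti (Set.mem_Icc.2 ⟨le_rfl, ht.1.le⟩) (Set.mem_Icc.2 ⟨hc0, hct⟩) hc0'
        rw [h0] at this; exact this.le
    · have := hmono.monotoneOn (Set.mem_Ici.2 htc.le) (Set.mem_Ici.2 (htc.le.trans hccs)) hccs
      rw [hcs0] at this; exact this
  · intro c hcsc
    have := hmono.monotoneOn (Set.mem_Ici.2 ht.2.le) (Set.mem_Ici.2 (ht.2.le.trans hcsc)) hcsc
    rw [hcs0] at this; exact this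

/-- g is maximized at cs. -/
private lemma g_max (cs : ℝ) (hcs : 0 < cs)
    (hroot : 2 - 2 * Real.exp cs + cs * (Real.exp cs - 2) = 0) :
    ∀ c, 0 ≤ c → c ^ 2 * (Real.exp (-c) - Real.exp (-(2 * c)))
      ≤ cs ^ 2 * (Real.exp (-cs) - Real.exp (-(2 * cs))) := by
  obtain ⟨hneg, hpos⟩ := h_sign cs hcs hroot
  set g : ℝ → ℝ := fun c => c ^ 2 * Real.exp (-c) - c ^ 2 * Real.exp (-(2 * c)) with hg
  have key : ∀ c : ℝ, Real.exp (-c) = Real.exp c * Real.exp (-(2*c)) := by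
    intro c; rw [← Real.exp_add]; ring_nf
  have gsign : ∀ c, 0 ≤ c →
      (2 * c - c ^ 2) * Real.exp (-c) - (2 * c - 2 * c ^ 2) * Real.exp (-(2 * c))
      = c * Real.exp (-(2*c)) * (-(2 - 2 * Real.exp c + c * (Real.exp c - 2))) := by
    intro c _; rw [key c]; ring
  have gmono : MonotoneOn g (Set.Icc 0 cs) := by
    apply monotoneOn_of_hasDerivWithinAt_nonneg
      (f' := fun c => (2 * c - c ^ 2) * Real.exp (-c) - (2 * c - 2 * c ^ 2) * Real.exp (-(2 * c)))
      (convex_Icc 0 cs) (fun x _ => (hasDerivAt_g x).continuousAt.continuousWithinAt)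
      (fun x _ => (hasDerivAt_g x).hasDerivWithinAt)
    intro x hx
    rw [interior_Icc] at hx
    rw [gsign x hx.1.le]
    exact mul_nonneg (mul_nonneg hx.1.le (Real.exp_pos _).le)
      (neg_nonneg.2 (hneg x hx.1.le hx.2.le))
  have ganti : AntitoneOn g (Set.Ici cs) := by
    apply antitoneOn_of_hasDerivWithinAt_nonpos
      (f' := fun c => (2 * c - c ^ 2) * Real.exp (-c) - (2 * c - 2 * c ^ 2) * Real.exp (-(2 * c)))
      (convex_Ici cs) (fun x _ => (hasDerivAt_g x).continuousAt.continuousWithinAt)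
      (fun x _ => (hasDerivAt_g x).hasDerivWithinAt)
    intro x hx
    rw [interior_Ici] at hx
    have hx' : cs < x := hx
    rw [gsign x (hcs.trans hx').le]
    exact mul_nonpos_of_nonneg_of_nonpos
      (mul_nonneg (hcs.trans hx').le (Real.exp_pos _).le)
      (neg_nonpos.2 (hpos x hx'.le))
  intro c hc
  have goal : g c ≤ g cs := by
    rcases le_or_gt c cs with hccs | hcsc
    · exact gmono (Set.mem_Icc.2 ⟨hc, hccs⟩) (Set.mem_Icc.2 ⟨hcs.le, le_rfl⟩) hccs
    · exact ganti (Set.mem_Ici.2 le_rfl) (Set.mem_Ici.2 hcsc.le) hcsc.le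
  have e1 : g c = c ^ 2 * (Real.exp (-c) - Real.exp (-(2 * c))) := by rw [hg]; ring
  have e2 : g cs = cs ^ 2 * (Real.exp (-cs) - Real.exp (-(2 * cs))) := by rw [hg]; ring
  rw [← e1, ← e2]; exact goal

/-- Key inequality: feasible values are at most g(cs). -/
private lemma key_bound (cs : ℝ) (hcs : 0 < cs)
    (hroot : 2 - 2 * Real.exp cs + cs * (Real.exp cs - 2) = 0) :
    ∀ w c : ℝ, 0 ≤ w → w ≤ 1 → 0 ≤ c →
      w * c ^ 2 * Real.exp (-c) - w ^ 2 * c ^ 2 * Real.exp (-(2 * c))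
      ≤ cs ^ 2 * (Real.exp (-cs) - Real.exp (-(2 * cs))) := by
  intro w c hw0 hw1 hc
  have gmax := g_max cs hcs hroot
  have key : Real.exp (-c) = Real.exp c * Real.exp (-(2*c)) := by
    rw [← Real.exp_add]; ring_nf
  rcases le_or_gt 2 (Real.exp c) with h2 | h2
  · -- large c: value ≤ g c ≤ g cs
    calc w * c ^ 2 * Real.exp (-c) - w ^ 2 * c ^ 2 * Real.exp (-(2 * c))
        ≤ c ^ 2 * (Real.exp (-c) - Real.exp (-(2 * c))) := by
          rw [key]
          have hE := Real.exp_pos (-(2*c))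
          nlinarith [mul_nonneg (mul_nonneg (sub_nonneg.2 hw1) hE.le)
            (mul_nonneg (sq_nonneg c) (by nlinarith : (0:ℝ) ≤ Real.exp c - (1 + w)))]
      _ ≤ cs ^ 2 * (Real.exp (-cs) - Real.exp (-(2 * cs))) := gmax c hc
  · -- small c: value ≤ c²/4 ≤ (ln 2)²/4 = g (ln 2) ≤ g cs
    have hc2 : c ≤ Real.log 2 := by
      rcases le_or_gt c (Real.log 2) with h | h
      · exact h
      · exfalso
        have := Real.exp_lt_exp.2 h
        rw [Real.exp_log (by norm_num : (0:ℝ) < 2)] at this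
        linarith
    have hquad : w * c ^ 2 * Real.exp (-c) - w ^ 2 * c ^ 2 * Real.exp (-(2 * c)) ≤ c ^ 2 / 4 := by
      rcases eq_or_lt_of_le hc with hc0 | hc0
      · rw [← hc0]; norm_num
      · have hE := Real.exp_pos (-(2*c))
        -- w*A - w²*B ≤ A²/(4B) with A = c²e^{-c}, B = c²e^{-2c}, A²/(4B) = c²/4
        have h1 : c ^ 2 * (Real.exp (-(2 * c)) * Real.exp c * Real.exp c) = c ^ 2 := by
          rw [← Real.exp_add, ← Real.exp_add,
            show -(2 * c) + c + c = 0 by ring, Real.exp_zero, mul_one]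
        rw [key]
        nlinarith [mul_nonneg (mul_nonneg (sq_nonneg c) hE.le) (sq_nonneg (2 * w - Real.exp c)),
          h1]
    have hln : c ^ 2 / 4 ≤ cs ^ 2 * (Real.exp (-cs) - Real.exp (-(2 * cs))) := by
      have hln2 : (Real.log 2) ^ 2 * (Real.exp (-(Real.log 2)) - Real.exp (-(2 * Real.log 2)))
          = (Real.log 2) ^ 2 / 4 := by
        rw [Real.exp_neg, Real.exp_log (by norm_num : (0:ℝ) < 2)]
        have h14 : Real.exp (-(2 * Real.log 2)) = 1 / 4 := by
          have : Real.exp (-(2 * Real.log 2))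
              = Real.exp (-(Real.log 2)) * Real.exp (-(Real.log 2)) := by
            rw [← Real.exp_add]; congr 1; ring
          rw [this, Real.exp_neg, Real.exp_log (by norm_num : (0:ℝ) < 2)]
          norm_num
        rw [h14]; ring_nf
      have hlog2pos : 0 ≤ Real.log 2 := Real.log_nonneg (by norm_num)
      have := gmax (Real.log 2) hlog2pos
      rw [hln2] at this
      nlinarith [sq_nonneg c, sq_nonneg (Real.log 2)]
    linarith

theorem alpha_of_large_alphabet
    (cs : ℝ) (hcs : 0 < cs)
    (hroot : 2 - 2 * Real.exp cs + cs * (Real.exp cs - 2) = 0)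
    (b : ℝ) (hb : 1 / cs ≤ b) :
    alphaVal b = sSup {v : ℝ | ∃ c : ℝ, 0 ≤ c ∧
        v = c ^ 2 * (Real.exp (-c) - Real.exp (-(2 * c)))} ∧
    alphaVal b = cs ^ 2 * (Real.exp (-cs) - Real.exp (-(2 * cs))) ∧
    (0 ≤ (1 : ℝ) ∧ (1 : ℝ) ≤ 1 ∧ 0 ≤ cs ∧ (1 : ℝ) ≤ b * cs) ∧
    1 * cs ^ 2 * Real.exp (-cs) - 1 ^ 2 * cs ^ 2 * Real.exp (-(2 * cs)) = alphaVal b := by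
  set M := cs ^ 2 * (Real.exp (-cs) - Real.exp (-(2 * cs))) with hM
  have hM0 : 0 ≤ M := by
    have : Real.exp (-(2 * cs)) ≤ Real.exp (-cs) := Real.exp_le_exp.2 (by linarith)
    nlinarith [sq_nonneg cs]
  have hbcs : (1:ℝ) ≤ b * cs := by
    rw [div_le_iff₀ hcs] at hb
    nlinarith
  have hkey := key_bound cs hcs hroot
  have hgmax := g_max cs hcs hroot
  -- alphaVal b = M
  have hS : alphaVal b = M := by
    apply le_antisymm
    · apply Real.sSup_le _ hM0
      rintro v ⟨w, c, hw0, hw1, hc, -, rfl⟩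
      exact hkey w c hw0 hw1 hc
    · apply le_csSup
      · exact ⟨M, by rintro v ⟨w, c, hw0, hw1, hc, -, rfl⟩; exact hkey w c hw0 hw1 hc⟩
      · exact ⟨1, cs, by norm_num, le_rfl, hcs.le, by simpa using hbcs, by rw [hM]; ring⟩
  have hT : sSup {v : ℝ | ∃ c : ℝ, 0 ≤ c ∧
      v = c ^ 2 * (Real.exp (-c) - Real.exp (-(2 * c)))} = M := by
    apply le_antisymm
    · apply Real.sSup_le _ hM0
      rintro v ⟨c, hc, rfl⟩
      exact hgmax c hc
    · apply le_csSup
      · exact ⟨M, by rintro v ⟨c, hc, rfl⟩; exact hgmax c hc⟩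
      · exact ⟨cs, hcs.le, rfl⟩
  refine ⟨by rw [hS, hT], hS, ⟨by norm_num, le_rfl, hcs.le, hbcs⟩, by rw [hS, hM]; ring⟩
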